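/- FDR bound under approximate pairwise exchangeability (Theorem 3, part (b)). Under the same setup and hypothesis as Theorem 3, part (a) — G_1,…,G_m real random variables, τ and e_i defined from G and α ∈ (0,1) by the mirror threshold and e-value formulas, (K̂L_i)_{i∈H₀} real random variables satisfying, for every i ∈ H₀ and ε ≥ 0, E[1{G_i > 0, K̂L_i ≤ ε} | 𝓖_i] ≤ e^ε · E[1{G_i < 0} | 𝓖_i] a.s., with 𝓖_i = σ(|G_i|, (G_j)_{j≠i}) — let R_ebh be the rejection set of the e-BH procedure at level α applied to (e_1,…,e_m). Then FDR := E[ |R_ebh ∩ H₀| / max(|R_ebh|, 1) ] ≤ inf_{ε ≥ 0} α·[ e^ε + Σ_{i∈H₀} ℙ( K̂L_i > ε ) ]. -/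

import Mathlib

open MeasureTheory
open scoped Classical

/-- The mirror threshold `τ`: the infimum (in the extended reals, `+∞` when the set is
empty) of the values `λ ∈ {|G 1|, …, |G m|}` at which the mirror FDP estimate
`(1 + #{j : G j ≤ −λ}) / max(#{j : G j ≥ λ}, 1)` is at most `α`. -/
noncomputable def mirrorThreshold {m : ℕ} (α : ℝ) (G : Fin m → ℝ) : EReal :=
  sInf ((fun x : ℝ => (x : EReal)) ''
    {x : ℝ | (∃ i, |G i| = x) ∧
      ((1 : ℝ) + ((Finset.univ.filter fun j => G j ≤ -x).card : ℝ)) /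
        max ((Finset.univ.filter fun j => x ≤ G j).card : ℝ) 1 ≤ α})

/-- The mirror e-values `e i = m·1{G i ≥ τ}/(1 + #{j : G j ≤ −τ})`; when `τ = +∞` the
indicator vanishes, so `e i = 0`. -/
noncomputable def mirrorEValue {m : ℕ} (α : ℝ) (G : Fin m → ℝ) (i : Fin m) : ℝ :=
  (m : ℝ) * (if mirrorThreshold α G ≤ (G i : EReal) then (1 : ℝ) else 0) /
    ((1 : ℝ) + ((Finset.univ.filter fun j =>
        (G j : EReal) ≤ -(mirrorThreshold α G)).card : ℝ))

/-- The nonincreasing rearrangement `e_(1) ≥ ⋯ ≥ e_(m)` of a tuple (via `Tuple.sort`,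
which sorts nondecreasingly, composed with index reversal). -/
noncomputable def sortedDesc {m : ℕ} (e : Fin m → ℝ) (i : Fin m) : ℝ :=
  e (Tuple.sort e i.rev)

/-- The e-BH procedure at level `α`: with `e_(1) ≥ ⋯ ≥ e_(m)` the nonincreasing
rearrangement and `k̂ = max{ i : i·e_(i)/m ≥ 1/α }`, reject `{ i : e i ≥ e_(k̂) }`
(and reject nothing when no such `k̂` exists). -/
noncomputable def ebh {m : ℕ} (α : ℝ) (e : Fin m → ℝ) : Finset (Fin m) :=
  if h : (Finset.univ.filter fun k : Fin m =>
      1 / α ≤ (((k : ℕ) : ℝ) + 1) * sortedDesc e k / m).Nonempty then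
    Finset.univ.filter fun i =>
      sortedDesc e ((Finset.univ.filter fun k : Fin m =>
        1 / α ≤ (((k : ℕ) : ℝ) + 1) * sortedDesc e k / m).max' h) ≤ e i
  else ∅

/-- The σ-algebra generated by `|G i|` and `(G j)_{j ≠ i}`. -/
def sigmaG {Ω : Type*} [MeasurableSpace Ω] {m : ℕ} (G : Fin m → Ω → ℝ) (i : Fin m) :
    MeasurableSpace Ω :=
  MeasurableSpace.comap
    (fun ω => (|G i ω|, fun j : {j : Fin m // j ≠ i} => G j.1 ω)) inferInstance

namespace FDR3

variable {m : ℕ}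

/-- The mirror condition predicate. -/
def mcond (α : ℝ) (v : Fin m → ℝ) (x : ℝ) : Prop :=
  (∃ i, |v i| = x) ∧
    ((1 : ℝ) + ((Finset.univ.filter fun j => v j ≤ -x).card : ℝ)) /
      max ((Finset.univ.filter fun j => x ≤ v j).card : ℝ) 1 ≤ α

lemma mirrorThreshold_def (α : ℝ) (v : Fin m → ℝ) :
    mirrorThreshold α v = sInf ((fun x : ℝ => (x : EReal)) '' {x | mcond α v x}) := rfl

lemma mirrorThreshold_nonneg (α : ℝ) (v : Fin m → ℝ) : 0 ≤ mirrorThreshold α v := by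
  rw [mirrorThreshold_def]
  refine le_sInf ?_
  rintro b ⟨x, hx, rfl⟩
  obtain ⟨i, hi⟩ := hx.1
  exact EReal.coe_nonneg.2 (hi ▸ abs_nonneg _)

lemma mirrorThreshold_top (α : ℝ) (v : Fin m → ℝ) (h : ¬ {x | mcond α v x}.Nonempty) :
    mirrorThreshold α v = ⊤ := by
  rw [mirrorThreshold_def, Set.not_nonempty_iff_eq_empty.1 h, Set.image_empty, sInf_empty]

lemma mirrorThreshold_least (α : ℝ) (v : Fin m → ℝ) (h : {x | mcond α v x}.Nonempty) :
    ∃ x₀, mcond α v x₀ ∧ (∀ x, mcond α v x → x₀ ≤ x) ∧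
      mirrorThreshold α v = (x₀ : EReal) := by
  have hsub : {x | mcond α v x} ⊆ Set.range (fun i => |v i|) := by
    rintro x hx
    obtain ⟨i, hi⟩ := hx.1
    exact ⟨i, hi⟩
  have hfin : {x | mcond α v x}.Finite := (Set.finite_range _).subset hsub
  obtain ⟨x₀, hx₀, hmin'⟩ := hfin.exists_minimalFor id _ h
  have hmin : ∀ x ∈ {x | mcond α v x}, id x ≤ id x₀ → id x₀ = id x :=
    fun x hx hle => le_antisymm (hmin' hx hle) hle
  refine ⟨x₀, hx₀, ?_, ?_⟩
  · intro x hx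
    by_contra hlt
    push_neg at hlt
    exact absurd (hmin x hx hlt.le) (by simpa using hlt.ne')
  · rw [mirrorThreshold_def]
    refine le_antisymm (sInf_le ⟨x₀, hx₀, rfl⟩) (le_sInf ?_)
    rintro b ⟨x, hx, rfl⟩
    refine EReal.coe_le_coe_iff.2 ?_
    by_contra hlt
    push_neg at hlt
    exact absurd (hmin x hx hlt.le) (by simpa using hlt.ne')

lemma card_filter_perm {n : ℕ} (σ : Equiv.Perm (Fin n)) (p : Fin n → Prop) :
    (Finset.univ.filter fun k => p (σ k)).card = (Finset.univ.filter p).card := by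
  refine Finset.card_bij (fun k _ => σ k) ?_ ?_ ?_
  · intro a ha
    simp only [Finset.mem_filter, Finset.mem_univ, true_and] at ha ⊢
    exact ha
  · intro a _ b _ hab
    exact σ.injective hab
  · intro b hb
    simp only [Finset.mem_filter, Finset.mem_univ, true_and] at hb
    exact ⟨σ.symm b, by simp [hb], by simp⟩

/-- The rejection set of e-BH applied to mirror e-values is `{i : τ ≤ G i}`. -/
lemma ebh_eq (hm : 1 ≤ m) {α : ℝ} (hα : α ∈ Set.Ioo (0:ℝ) 1) (v : Fin m → ℝ) :
    ebh α (fun i => mirrorEValue α v i) =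
      Finset.univ.filter fun i => mirrorThreshold α v ≤ (v i : EReal) := by
  set e : Fin m → ℝ := fun i => mirrorEValue α v i with he_def
  by_cases hne : {x | mcond α v x}.Nonempty
  · obtain ⟨x₀, hx₀, hmin, hτ⟩ := mirrorThreshold_least α v hne
    -- the count bridge
    have hcnt : (Finset.univ.filter fun j => (v j : EReal) ≤ -(mirrorThreshold α v)) =
        Finset.univ.filter fun j => v j ≤ -x₀ := by
      apply Finset.filter_congr
      intro j _
      rw [hτ, ← EReal.coe_neg, EReal.coe_le_coe_iff]
    set D : ℝ := 1 + ((Finset.univ.filter fun j => v j ≤ -x₀).card : ℝ) with hD_def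
    have hD : 0 < D := by positivity
    set c : ℝ := (m : ℝ) / D with hc_def
    have hm0 : (0:ℝ) < m := by exact_mod_cast hm
    have hc : 0 < c := div_pos hm0 hD
    have he : ∀ i, e i = if x₀ ≤ v i then c else 0 := by
      intro i
      show mirrorEValue α v i = _
      unfold mirrorEValue
      rw [hcnt]
      simp only [hτ, EReal.coe_le_coe_iff]
      split_ifs with h
      · rw [mul_one]
      · rw [mul_zero, zero_div]
    have hvals : ∀ i, e i = 0 ∨ e i = c := by
      intro i; rw [he i]; split_ifs with h
      · exact Or.inr rfl
      · exact Or.inl rfl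
    set Np : ℕ := (Finset.univ.filter fun j => x₀ ≤ v j).card with hNp_def
    have h2 : (1 + ((Finset.univ.filter fun j => v j ≤ -x₀).card : ℝ)) / max ((Np:ℝ)) 1 ≤ α :=
      hx₀.2
    have hNp1 : 1 ≤ Np := by
      by_contra h
      push_neg at h
      have h0 : Np = 0 := by omega
      rw [h0] at h2
      simp only [Nat.cast_zero, max_eq_right zero_le_one, div_one] at h2
      have hnn : (0:ℝ) ≤ ((Finset.univ.filter fun j => v j ≤ -x₀).card : ℝ) := Nat.cast_nonneg _
      linarith [hα.2]
    have hNpm : Np ≤ m := le_trans (Finset.card_filter_le _ _) (by simp)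
    have hmax : max ((Np : ℝ)) 1 = (Np : ℝ) := max_eq_left (by exact_mod_cast hNp1)
    have hNppos : (0:ℝ) < Np := by exact_mod_cast hNp1
    have hkey : D ≤ α * Np := by
      rw [hmax, div_le_iff₀ hNppos] at h2
      rw [hD_def]; linarith
    -- sorting analysis
    have hmono : Monotone (e ∘ Tuple.sort e) := Tuple.monotone_sort e
    set T : Finset (Fin m) := Finset.univ.filter (fun k => c ≤ e (Tuple.sort e k)) with hT_def
    have hTcard : T.card = Np := by
      rw [hT_def, card_filter_perm (Tuple.sort e) (fun k => c ≤ e k), hNp_def]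
      congr 1
      apply Finset.filter_congr
      intro i _
      rw [he i]
      constructor
      · intro h; by_contra hx; rw [if_neg hx] at h; exact absurd h (not_le.2 hc)
      · intro h; rw [if_pos h]
    have hTne : T.Nonempty := Finset.card_pos.1 (by rw [hTcard]; exact hNp1)
    set k₀ := T.min' hTne with hk₀
    have hk₀T : k₀ ∈ T := T.min'_mem hTne
    have hupper : ∀ k, k₀ ≤ k → k ∈ T := by
      intro k hk
      simp only [hT_def, Finset.mem_filter, Finset.mem_univ, true_and] at hk₀T ⊢
      exact le_trans hk₀T (hmono hk)
    have hTIci : T = Finset.Ici k₀ := by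
      ext k
      simp only [Finset.mem_Ici]
      exact ⟨fun h => T.min'_le k h, hupper k⟩
    have hk₀val : (k₀ : ℕ) = m - Np := by
      have h1 : Np = m - (k₀ : ℕ) := by rw [← hTcard, hTIci, Fin.card_Ici]
      have hlt := k₀.isLt
      omega
    set kw : Fin m := k₀.rev with hkw
    have hsdkw : sortedDesc e kw = e (Tuple.sort e k₀) := by
      rw [sortedDesc, hkw, Fin.rev_rev]
    have hfk₀ : e (Tuple.sort e k₀) = c := by
      rcases hvals (Tuple.sort e k₀) with h | h
      · exfalso
        have hcle : c ≤ e (Tuple.sort e k₀) := by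
          simpa [hT_def, Finset.mem_filter] using hk₀T
        rw [h] at hcle; exact absurd hcle (not_le.2 hc)
      · exact h
    have hkwval : ((kw : ℕ) : ℝ) + 1 = (Np : ℝ) := by
      have h1 : (kw : ℕ) = m - ((k₀:ℕ) + 1) := Fin.val_rev k₀
      have hlt := k₀.isLt
      have h2 : (kw:ℕ) + 1 = Np := by omega
      exact_mod_cast congrArg (Nat.cast : ℕ → ℝ) h2
    have hcondkw : 1 / α ≤ (((kw : ℕ) : ℝ) + 1) * sortedDesc e kw / ↑m := by
      rw [hsdkw, hfk₀, hkwval, hc_def]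
      have heq : ((Np:ℝ) * ((m:ℝ)/D))/(m:ℝ) = (Np:ℝ)/D := by
        field_simp
      rw [heq, div_le_div_iff₀ hα.1 hD]
      nlinarith [hkey]
    have hne' : (Finset.univ.filter fun k : Fin m =>
        1 / α ≤ (((k : ℕ) : ℝ) + 1) * sortedDesc e k / m).Nonempty :=
      ⟨kw, Finset.mem_filter.2 ⟨Finset.mem_univ _, hcondkw⟩⟩
    unfold ebh
    rw [dif_pos hne']
    set K := (Finset.univ.filter fun k : Fin m =>
        1 / α ≤ (((k : ℕ) : ℝ) + 1) * sortedDesc e k / m).max' hne' with hK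
    have hKmem := Finset.max'_mem _ hne'
    rw [← hK, Finset.mem_filter] at hKmem
    have hKcond := hKmem.2
    have hsdK : sortedDesc e K = c := by
      rcases hvals (Tuple.sort e K.rev) with h | h
      · exfalso
        rw [show sortedDesc e K = 0 from h] at hKcond
        simp only [mul_zero, zero_div] at hKcond
        exact absurd hKcond (not_le.2 (one_div_pos.2 hα.1))
      · exact h
    ext i
    simp only [Finset.mem_filter, Finset.mem_univ, true_and]
    rw [hsdK, he i, hτ, EReal.coe_le_coe_iff]
    constructor
    · intro h
      by_contra hx
      rw [if_neg hx] at h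
      exact absurd h (not_le.2 hc)
    · intro h
      rw [if_pos h]
  · -- τ = ⊤ : everything is empty
    have hτ := mirrorThreshold_top α v hne
    have he : ∀ i, e i = 0 := by
      intro i
      show mirrorEValue α v i = _
      unfold mirrorEValue
      rw [hτ]
      rw [if_neg (by intro hcon; exact (EReal.coe_ne_top (v i)) (top_le_iff.1 hcon))]
      rw [mul_zero, zero_div]
    have hsd : ∀ k, sortedDesc e k = 0 := fun k => he _
    have hnot : ¬ (Finset.univ.filter fun k : Fin m =>
        1 / α ≤ (((k : ℕ) : ℝ) + 1) * sortedDesc e k / m).Nonempty := by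
      rw [Finset.filter_eq_empty_iff.2 ?_]
      · exact Finset.not_nonempty_empty
      · intro k _
        rw [hsd k]
        simp only [mul_zero, zero_div]
        exact not_le.2 (one_div_pos.2 hα.1)
    unfold ebh
    rw [dif_neg hnot]
    symm
    rw [Finset.filter_eq_empty_iff]
    intro i _
    rw [hτ]
    intro hcon
    exact (EReal.coe_ne_top (v i)) (top_le_iff.1 hcon)


lemma mcond_facts {α : ℝ} (hα : α ∈ Set.Ioo (0:ℝ) 1) {v : Fin m → ℝ} {x₀ : ℝ}
    (hx₀ : mcond α v x₀) :
    1 ≤ (Finset.univ.filter fun j => x₀ ≤ v j).card ∧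
    (1 + ((Finset.univ.filter fun j => v j ≤ -x₀).card : ℝ)) ≤
      α * ((Finset.univ.filter fun j => x₀ ≤ v j).card : ℝ) := by
  set Np : ℕ := (Finset.univ.filter fun j => x₀ ≤ v j).card with hNp_def
  have h2 : (1 + ((Finset.univ.filter fun j => v j ≤ -x₀).card : ℝ)) / max ((Np:ℝ)) 1 ≤ α :=
    hx₀.2
  have hNp1 : 1 ≤ Np := by
    by_contra h
    push_neg at h
    have h0 : Np = 0 := by omega
    rw [h0] at h2
    simp only [Nat.cast_zero, max_eq_right zero_le_one, div_one] at h2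
    have hnn : (0:ℝ) ≤ ((Finset.univ.filter fun j => v j ≤ -x₀).card : ℝ) := Nat.cast_nonneg _
    linarith [hα.2]
  refine ⟨hNp1, ?_⟩
  have hmax : max ((Np : ℝ)) 1 = (Np : ℝ) := max_eq_left (by exact_mod_cast hNp1)
  have hNppos : (0:ℝ) < Np := by exact_mod_cast hNp1
  rw [hmax, div_le_iff₀ hNppos] at h2
  linarith

/-- Pointwise FDP bound. -/
lemma fdp_le (hm : 1 ≤ m) {α : ℝ} (hα : α ∈ Set.Ioo (0:ℝ) 1) (v : Fin m → ℝ)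
    (H0 : Finset (Fin m)) :
    (((ebh α fun i => mirrorEValue α v i) ∩ H0).card : ℝ) /
        max (((ebh α fun i => mirrorEValue α v i).card : ℝ)) 1
      ≤ α * ∑ i ∈ H0, (if mirrorThreshold α v ≤ (v i : EReal) then (1:ℝ) else 0) /
          (1 + ((Finset.univ.filter fun j =>
            (v j : EReal) ≤ -(mirrorThreshold α v)).card : ℝ)) := by
  rw [ebh_eq hm hα v]
  by_cases hne : {x | mcond α v x}.Nonempty
  · obtain ⟨x₀, hx₀, hmin, hτ⟩ := mirrorThreshold_least α v hne
    simp only [hτ, ← EReal.coe_neg, EReal.coe_le_coe_iff]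
    obtain ⟨hNp1, hkey⟩ := mcond_facts hα hx₀
    have hNppos : (0:ℝ) < ((Finset.univ.filter fun j => x₀ ≤ v j).card : ℝ) := by
      exact_mod_cast hNp1
    have hmax : max (((Finset.univ.filter fun j => x₀ ≤ v j).card : ℝ)) 1
        = ((Finset.univ.filter fun j => x₀ ≤ v j).card : ℝ) := max_eq_left (by exact_mod_cast hNp1)
    rw [hmax]
    have hinter : (Finset.univ.filter fun i : Fin m => x₀ ≤ v i) ∩ H0
        = H0.filter fun i => x₀ ≤ v i := by
      ext i
      simp only [Finset.mem_inter, Finset.mem_filter, Finset.mem_univ, true_and]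
      exact And.comm
    rw [hinter]
    have hcard : ((H0.filter fun i => x₀ ≤ v i).card : ℝ)
        = ∑ i ∈ H0, if x₀ ≤ v i then (1:ℝ) else 0 := by
      rw [Finset.card_filter]
      push_cast
      rfl
    rw [hcard, Finset.sum_div, Finset.mul_sum]
    apply Finset.sum_le_sum
    intro i _
    have hD : (0:ℝ) < 1 + ((Finset.univ.filter fun j => v j ≤ -x₀).card : ℝ) := by positivity
    by_cases h : x₀ ≤ v i
    · rw [if_pos h]
      rw [mul_one_div, div_le_div_iff₀ hNppos hD]
      linarith
    · rw [if_neg h, zero_div, zero_div, mul_zero]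
  · have hτ := mirrorThreshold_top α v hne
    have hfilter : (Finset.univ.filter fun i : Fin m => mirrorThreshold α v ≤ (v i : EReal)) = ∅ := by
      rw [Finset.filter_eq_empty_iff]
      intro i _
      rw [hτ]
      intro hcon
      exact (EReal.coe_ne_top (v i)) (top_le_iff.1 hcon)
    rw [hfilter]
    simp only [Finset.empty_inter, Finset.card_empty, Nat.cast_zero, zero_div]
    apply mul_nonneg hα.1.le
    apply Finset.sum_nonneg
    intro i _
    positivity

/-- The leave-one-out weight. -/
noncomputable def Ydef (α : ℝ) (v : Fin m → ℝ) (i : Fin m) : ℝ :=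
  (if mirrorThreshold α (Function.update v i |v i|) ≤ ((|v i| : ℝ) : EReal)
      then (1:ℝ) else 0) /
    (1 + ((Finset.univ.filter fun j =>
      ((Function.update v i |v i| j : ℝ) : EReal) ≤
        -(mirrorThreshold α (Function.update v i |v i|))).card : ℝ))

lemma Ydef_nonneg (α : ℝ) (v : Fin m → ℝ) (i : Fin m) : 0 ≤ Ydef α v i := by
  unfold Ydef
  split_ifs with h
  · positivity
  · rw [zero_div]

lemma Ydef_le_one (α : ℝ) (v : Fin m → ℝ) (i : Fin m) : Ydef α v i ≤ 1 := by
  unfold Ydef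
  rw [div_le_one (by positivity)]
  have := Nat.cast_nonneg (α := ℝ) ((Finset.univ.filter fun j =>
      ((Function.update v i |v i| j : ℝ) : EReal) ≤
        -(mirrorThreshold α (Function.update v i |v i|))).card)
  split_ifs with h <;> linarith

lemma Ydef_of_nonneg {α : ℝ} {v : Fin m → ℝ} {i : Fin m} (h : 0 ≤ v i) :
    Ydef α v i = (if mirrorThreshold α v ≤ ((v i : ℝ) : EReal) then (1:ℝ) else 0) /
      (1 + ((Finset.univ.filter fun j =>
        ((v j : ℝ) : EReal) ≤ -(mirrorThreshold α v)).card : ℝ)) := by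
  have habs : |v i| = v i := abs_of_nonneg h
  have hupd : Function.update v i |v i| = v := by
    rw [habs]
    exact Function.update_eq_self i v
  unfold Ydef
  rw [hupd, habs]

lemma abs_update (v : Fin m → ℝ) (w j : Fin m) :
    |Function.update v w |v w| j| = |v j| := by
  by_cases h : j = w
  · subst h
    rw [Function.update_self, abs_abs]
  · rw [Function.update_of_ne h]

/-- Claim A : pairwise consistency of leave-one-out thresholds. -/
lemma claimA {α : ℝ} (v : Fin m → ℝ) {i k : Fin m} (hik : k ≠ i)
    (hvi : v i ≤ 0) (hvk : v k ≤ 0)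
    {xi xk : ℝ}
    (hmini : ∀ x, mcond α (Function.update v i |v i|) x → xi ≤ x)
    (hxilei : xi ≤ |v i|)
    (hxk : mcond α (Function.update v k |v k|) xk)
    (hxklek : xk ≤ |v k|) :
    xi ≤ |v k| := by
  by_contra hcon
  push_neg at hcon
  have hxk0 : 0 ≤ xk := by
    obtain ⟨j, hj⟩ := hxk.1
    exact hj ▸ abs_nonneg _
  have hklti : |v k| < |v i| := lt_of_lt_of_le hcon hxilei
  have hvipos : 0 < |v i| := lt_of_le_of_lt (le_trans hxk0 hxklek) hklti
  have hxklei : xk ≤ |v i| := le_of_lt (lt_of_le_of_lt hxklek hklti)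
  have hwi_i : Function.update v i |v i| i = |v i| := Function.update_self i _ v
  have hwi_k : Function.update v i |v i| k = v k := Function.update_of_ne hik _ v
  have hwk_k : Function.update v k |v k| k = |v k| := Function.update_self k _ v
  have hwk_i : Function.update v k |v k| i = v i :=
    Function.update_of_ne (Ne.symm hik) _ v
  have hvi_eq : v i = -|v i| := by rw [abs_of_nonpos hvi]; ring
  have hvk_eq : v k = -|v k| := by rw [abs_of_nonpos hvk]; ring
  have hkey : mcond α (Function.update v i |v i|) xk := by
    constructor
    · obtain ⟨j, hj⟩ := hxk.1
      exact ⟨j, by rw [abs_update v i j, ← abs_update v k j, hj]⟩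
    · have hNm : (Finset.univ.filter fun j => Function.update v i |v i| j ≤ -xk).card
          ≤ (Finset.univ.filter fun j => Function.update v k |v k| j ≤ -xk).card := by
        apply Finset.card_le_card_of_injOn (Equiv.swap i k)
        · intro j hj
          rw [Finset.mem_coe, Finset.mem_filter] at hj ⊢
          refine ⟨Finset.mem_univ _, ?_⟩
          by_cases h1 : j = i
          · exfalso
            rw [h1, hwi_i] at hj
            linarith [hj.2]
          · by_cases h2 : j = k
            · rw [h2, Equiv.swap_apply_right, hwk_i, hvi_eq]
              linarith
            · rw [Equiv.swap_apply_of_ne_of_ne h1 h2, Function.update_of_ne h2]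
              rw [Function.update_of_ne h1] at hj
              exact hj.2
        · exact (Equiv.injective _).injOn
      have hNp : (Finset.univ.filter fun j => xk ≤ Function.update v k |v k| j).card
          ≤ (Finset.univ.filter fun j => xk ≤ Function.update v i |v i| j).card := by
        apply Finset.card_le_card_of_injOn (Equiv.swap i k)
        · intro j hj
          rw [Finset.mem_coe, Finset.mem_filter] at hj ⊢
          refine ⟨Finset.mem_univ _, ?_⟩
          by_cases h1 : j = i
          · exfalso
            rw [h1, hwk_i, hvi_eq] at hj
            linarith [hj.2]
          · by_cases h2 : j = k
            · rw [h2, Equiv.swap_apply_right, hwi_i]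
              linarith
            · rw [Equiv.swap_apply_of_ne_of_ne h1 h2, Function.update_of_ne h1]
              rw [Function.update_of_ne h2] at hj
              exact hj.2
        · exact (Equiv.injective _).injOn
      have h2 := hxk.2
      refine le_trans (div_le_div₀ (add_nonneg zero_le_one (Nat.cast_nonneg _)) ?_ ?_ ?_) h2
      · have : ((Finset.univ.filter fun j => Function.update v i |v i| j ≤ -xk).card : ℝ)
            ≤ ((Finset.univ.filter fun j => Function.update v k |v k| j ≤ -xk).card : ℝ) := by
          exact_mod_cast hNm
        linarith
      · exact lt_of_lt_of_le zero_lt_one (le_max_right _ 1)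
      · exact max_le_max (by exact_mod_cast hNp) le_rfl
  have hle := hmini xk hkey
  linarith

/-- The key deterministic inequality: the leave-one-out weights of nonpositive
coordinates sum to at most one. -/
lemma sum_Y_le_one (α : ℝ) (v : Fin m → ℝ) (S : Finset (Fin m)) :
    ∑ i ∈ S, Ydef α v i * (if v i ≤ 0 then (1:ℝ) else 0) ≤ 1 := by
  set A := S.filter (fun i => v i ≤ 0 ∧
    mirrorThreshold α (Function.update v i |v i|) ≤ ((|v i| : ℝ) : EReal)) with hA
  have hsum : ∑ i ∈ S, Ydef α v i * (if v i ≤ 0 then (1:ℝ) else 0)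
      = ∑ i ∈ A, Ydef α v i * (if v i ≤ 0 then (1:ℝ) else 0) := by
    symm
    apply Finset.sum_subset (Finset.filter_subset _ S)
    intro i hi hni
    simp only [Finset.mem_filter, not_and] at hni
    by_cases h1 : v i ≤ 0
    · have h2 := hni hi h1
      unfold Ydef
      rw [if_neg h2, zero_div, zero_mul]
    · rw [if_neg h1, mul_zero]
  rw [hsum]
  rcases Finset.eq_empty_or_nonempty A with hAe | hAne
  · rw [hAe]
    simp
  have hApos : (0:ℝ) < A.card := by exact_mod_cast Finset.card_pos.2 hAne
  have hbound : ∀ i ∈ A, Ydef α v i * (if v i ≤ 0 then (1:ℝ) else 0) ≤ 1 / A.card := by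
    intro i hiA
    have hiA' := hiA
    rw [hA, Finset.mem_filter] at hiA'
    obtain ⟨hiS, hvi, hτi⟩ := hiA'
    have hnei : {x | mcond α (Function.update v i |v i|) x}.Nonempty := by
      by_contra hcon
      rw [mirrorThreshold_top _ _ hcon] at hτi
      exact (EReal.coe_ne_top _) (top_le_iff.1 hτi)
    obtain ⟨xi, hxi, hmini, hτieq⟩ := mirrorThreshold_least _ _ hnei
    have hxile : xi ≤ |v i| := by
      rw [hτieq] at hτi
      exact EReal.coe_le_coe_iff.1 hτi
    have hcnteq : (Finset.univ.filter fun j =>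
        ((Function.update v i |v i| j : ℝ) : EReal) ≤
          -(mirrorThreshold α (Function.update v i |v i|)))
        = Finset.univ.filter fun j => Function.update v i |v i| j ≤ -xi := by
      apply Finset.filter_congr
      intro j _
      rw [hτieq, ← EReal.coe_neg, EReal.coe_le_coe_iff]
    have hsub : A.erase i ⊆
        Finset.univ.filter fun j => Function.update v i |v i| j ≤ -xi := by
      intro k hk
      have hki : k ≠ i := Finset.ne_of_mem_erase hk
      have hkA := Finset.mem_of_mem_erase hk
      rw [hA, Finset.mem_filter] at hkA
      obtain ⟨hkS, hvk, hτk⟩ := hkA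
      have hnek : {x | mcond α (Function.update v k |v k|) x}.Nonempty := by
        by_contra hcon
        rw [mirrorThreshold_top _ _ hcon] at hτk
        exact (EReal.coe_ne_top _) (top_le_iff.1 hτk)
      obtain ⟨xk, hxk, hmink, hτkeq⟩ := mirrorThreshold_least _ _ hnek
      have hxkle : xk ≤ |v k| := by
        rw [hτkeq] at hτk
        exact EReal.coe_le_coe_iff.1 hτk
      have hclaim : xi ≤ |v k| := claimA v hki hvi hvk hmini hxile hxk hxkle
      rw [Finset.mem_filter]
      refine ⟨Finset.mem_univ _, ?_⟩
      rw [Function.update_of_ne hki]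
      have hvk_eq : v k = -|v k| := by rw [abs_of_nonpos hvk]; ring
      rw [hvk_eq]
      linarith
    have hcard : (A.card : ℝ) ≤ 1 + ((Finset.univ.filter fun j =>
        Function.update v i |v i| j ≤ -xi).card : ℝ) := by
      have h1 : (A.erase i).card + 1 = A.card := by
        rw [Finset.card_erase_of_mem hiA]
        have : 1 ≤ A.card := Finset.card_pos.2 hAne
        omega
      have h2 : (A.erase i).card ≤ (Finset.univ.filter fun j =>
          Function.update v i |v i| j ≤ -xi).card := Finset.card_le_card hsub
      have : A.card ≤ (Finset.univ.filter fun j =>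
          Function.update v i |v i| j ≤ -xi).card + 1 := by omega
      push_cast
      exact_mod_cast by linarith [this]
    rw [if_pos hvi, mul_one]
    unfold Ydef
    rw [hcnteq, if_pos hτi]
    calc (1:ℝ) / (1 + ((Finset.univ.filter fun j =>
          Function.update v i |v i| j ≤ -xi).card : ℝ))
        ≤ 1 / (A.card : ℝ) := by
          apply one_div_le_one_div_of_le hApos
          linarith [hcard]
    _ = 1 / (A.card : ℝ) := rfl
  calc ∑ i ∈ A, Ydef α v i * (if v i ≤ 0 then (1:ℝ) else 0)
      ≤ ∑ _i ∈ A, 1 / (A.card : ℝ) := Finset.sum_le_sum hbound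
    _ = (A.card : ℝ) * (1 / (A.card : ℝ)) := by
        rw [Finset.sum_const, nsmul_eq_mul]
    _ ≤ 1 := by
        rw [mul_one_div, div_self (ne_of_gt hApos)]


/-- Per-summand pointwise bound. -/
lemma summand_le (α : ℝ) (v : Fin m → ℝ) (i : Fin m) (kli ε : ℝ) :
    (if mirrorThreshold α v ≤ (v i : EReal) then (1:ℝ) else 0) /
      (1 + ((Finset.univ.filter fun j =>
        (v j : EReal) ≤ -(mirrorThreshold α v)).card : ℝ))
    ≤ Ydef α v i * (if 0 < v i ∧ kli ≤ ε then (1:ℝ) else 0)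
      + Ydef α v i * (if v i = 0 then (1:ℝ) else 0)
      + (if ε < kli then (1:ℝ) else 0) := by
  have hY0 := Ydef_nonneg α v i
  have hD : (0:ℝ) < 1 + ((Finset.univ.filter fun j =>
      (v j : EReal) ≤ -(mirrorThreshold α v)).card : ℝ) := by positivity
  by_cases hkl : ε < kli
  · rw [if_pos hkl]
    have h1 : (if mirrorThreshold α v ≤ (v i : EReal) then (1:ℝ) else 0) /
        (1 + ((Finset.univ.filter fun j =>
          (v j : EReal) ≤ -(mirrorThreshold α v)).card : ℝ)) ≤ 1 := by
      rw [div_le_one hD]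
      have : (0:ℝ) ≤ ((Finset.univ.filter fun j =>
          (v j : EReal) ≤ -(mirrorThreshold α v)).card : ℝ) := Nat.cast_nonneg _
      split_ifs <;> linarith
    have h2 : (0:ℝ) ≤ Ydef α v i * (if 0 < v i ∧ kli ≤ ε then (1:ℝ) else 0) := by
      apply mul_nonneg hY0
      split_ifs <;> norm_num
    have h3 : (0:ℝ) ≤ Ydef α v i * (if v i = 0 then (1:ℝ) else 0) := by
      apply mul_nonneg hY0
      split_ifs <;> norm_num
    linarith
  · have hkl' : kli ≤ ε := not_lt.1 hkl
    rw [if_neg hkl, add_zero]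
    rcases lt_trichotomy (v i) 0 with hneg | hzero | hpos
    · have hnot : ¬ mirrorThreshold α v ≤ (v i : EReal) := by
        intro hcon
        have h0 := mirrorThreshold_nonneg α v
        have h1 : ((0:ℝ) : EReal) ≤ (v i : EReal) := le_trans h0 hcon
        have h2 : (0:ℝ) ≤ v i := EReal.coe_le_coe_iff.1 h1
        linarith
      rw [if_neg hnot, zero_div]
      have h2 : (0:ℝ) ≤ Ydef α v i * (if 0 < v i ∧ kli ≤ ε then (1:ℝ) else 0) := by
        apply mul_nonneg hY0
        split_ifs <;> norm_num
      have h3 : (0:ℝ) ≤ Ydef α v i * (if v i = 0 then (1:ℝ) else 0) := by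
        apply mul_nonneg hY0
        split_ifs <;> norm_num
      linarith
    · have e1 : (if 0 < v i ∧ kli ≤ ε then (1:ℝ) else 0) = 0 := by
        simp [hzero]
      have e2 : (if v i = 0 then (1:ℝ) else 0) = 1 := if_pos hzero
      rw [e1, e2, mul_zero, zero_add, mul_one, Ydef_of_nonneg (le_of_eq hzero.symm)]
    · have e1 : (if 0 < v i ∧ kli ≤ ε then (1:ℝ) else 0) = 1 := if_pos ⟨hpos, hkl'⟩
      have e2 : (if v i = 0 then (1:ℝ) else 0) = 0 := if_neg (by linarith)
      rw [e1, e2, mul_one, mul_zero, add_zero, Ydef_of_nonneg hpos.le]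

lemma ite_add_ite_nonpos (x : ℝ) :
    (if x < 0 then (1:ℝ) else 0) + (if x = 0 then (1:ℝ) else 0)
      = (if x ≤ 0 then (1:ℝ) else 0) := by
  rcases lt_trichotomy x 0 with h | h | h
  · rw [if_pos h, if_neg (by linarith), if_pos h.le, add_zero]
  · rw [if_neg (by linarith), if_pos h, if_pos h.le, zero_add]
  · rw [if_neg (by linarith), if_neg (by linarith), if_neg (by linarith), add_zero]

/-! ### Measurability -/

lemma mirrorThreshold_eq_iInf (α : ℝ) (v : Fin m → ℝ) :
    mirrorThreshold α v
      = ⨅ i : Fin m, (if mcond α v (|v i|) then ((|v i| : ℝ) : EReal) else ⊤) := by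
  rw [mirrorThreshold_def]
  apply le_antisymm
  · apply le_iInf
    intro i
    by_cases h : mcond α v (|v i|)
    · rw [if_pos h]
      exact sInf_le ⟨|v i|, h, rfl⟩
    · rw [if_neg h]
      exact le_top
  · apply le_sInf
    rintro b ⟨x, hx, rfl⟩
    obtain ⟨j, hj⟩ := hx.1
    refine iInf_le_of_le j ?_
    have hx' : mcond α v x := hx
    rw [hj, if_pos hx']

lemma card_filter_cast (p : Fin m → Prop) [DecidablePred p] :
    (((Finset.univ.filter p).card : ℝ)) = ∑ j, if p j then (1:ℝ) else 0 := by
  rw [Finset.card_filter]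
  push_cast
  rfl

lemma measurable_mirrorThreshold (α : ℝ) :
    Measurable (fun v : Fin m → ℝ => mirrorThreshold α v) := by
  simp only [mirrorThreshold_eq_iInf]
  apply Measurable.iInf
  intro i
  have hset : MeasurableSet {v : Fin m → ℝ | mcond α v (|v i|)} := by
    have heq : {v : Fin m → ℝ | mcond α v (|v i|)} = {v : Fin m → ℝ |
        ((1 : ℝ) + ((Finset.univ.filter fun j => v j ≤ -|v i|).card : ℝ)) /
          max ((Finset.univ.filter fun j => |v i| ≤ v j).card : ℝ) 1 ≤ α} := by
      ext v
      exact ⟨fun h => h.2, fun h => ⟨⟨i, rfl⟩, h⟩⟩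
    rw [heq]
    apply measurableSet_le _ measurable_const
    apply Measurable.div
    · apply Measurable.add measurable_const
      have hre : (fun v : Fin m → ℝ =>
          ((Finset.univ.filter fun j => v j ≤ -|v i|).card : ℝ))
          = fun v => ∑ j, if v j ≤ -|v i| then (1:ℝ) else 0 := by
        funext v
        exact card_filter_cast _
      rw [hre]
      apply Finset.measurable_sum
      intro j _
      apply Measurable.ite _ measurable_const measurable_const
      exact measurableSet_le (measurable_pi_apply j) ((measurable_pi_apply i).abs.neg)
    · apply Measurable.max _ measurable_const
      have hre : (fun v : Fin m → ℝ =>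
          ((Finset.univ.filter fun j => |v i| ≤ v j).card : ℝ))
          = fun v => ∑ j, if |v i| ≤ v j then (1:ℝ) else 0 := by
        funext v
        exact card_filter_cast _
      rw [hre]
      apply Finset.measurable_sum
      intro j _
      apply Measurable.ite _ measurable_const measurable_const
      exact measurableSet_le (measurable_pi_apply i).abs (measurable_pi_apply j)
  apply Measurable.ite hset
  · exact measurable_coe_real_ereal.comp (measurable_pi_apply i).abs
  · exact measurable_const

lemma measurable_updAbs (i : Fin m) :
    Measurable (fun v : Fin m → ℝ => Function.update v i |v i|) := by
  apply measurable_pi_lambda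
  intro j
  by_cases h : j = i
  · subst h
    simp only [Function.update_self]
    exact (measurable_pi_apply j).abs
  · simp only [Function.update_of_ne h]
    exact measurable_pi_apply j

lemma measurable_Ydef (α : ℝ) (i : Fin m) :
    Measurable (fun v : Fin m → ℝ => Ydef α v i) := by
  have hupd := measurable_updAbs (m := m) i
  have hτ : Measurable (fun v : Fin m → ℝ =>
      mirrorThreshold α (Function.update v i |v i|)) :=
    (measurable_mirrorThreshold α).comp hupd
  unfold Ydef
  apply Measurable.div
  · apply Measurable.ite _ measurable_const measurable_const
    exact measurableSet_le hτ (measurable_coe_real_ereal.comp (measurable_pi_apply i).abs)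
  · apply Measurable.add measurable_const
    have hre : (fun v : Fin m → ℝ => ((Finset.univ.filter fun j =>
        ((Function.update v i |v i| j : ℝ) : EReal) ≤
          -(mirrorThreshold α (Function.update v i |v i|))).card : ℝ))
        = fun v => ∑ j, if ((Function.update v i |v i| j : ℝ) : EReal) ≤
          -(mirrorThreshold α (Function.update v i |v i|)) then (1:ℝ) else 0 := by
      funext v
      exact card_filter_cast _
    rw [hre]
    apply Finset.measurable_sum
    intro j _
    apply Measurable.ite _ measurable_const measurable_const
    apply measurableSet_le
    · exact measurable_coe_real_ereal.comp ((measurable_pi_apply j).comp hupd)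
    · have hneg : Measurable (fun x : EReal => -x) := continuous_neg.measurable
      exact hneg.comp hτ

lemma Ydef_upd (α : ℝ) (v : Fin m → ℝ) (i : Fin m) :
    Ydef α (Function.update v i |v i|) i = Ydef α v i := by
  have h1 : Function.update v i |v i| i = |v i| := Function.update_self i _ v
  have h2 : Function.update (Function.update v i |v i|) i |Function.update v i |v i| i|
      = Function.update v i |v i| := by
    rw [h1, abs_abs, Function.update_idem]
  unfold Ydef
  rw [h2, h1, abs_abs]


section Prob

variable {Ω : Type*} [MeasurableSpace Ω]

lemma stronglyMeasurable_Ydef (α : ℝ) (G : Fin m → Ω → ℝ) (i : Fin m) :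
    StronglyMeasurable[sigmaG G i] (fun ω => Ydef α (fun k => G k ω) i) := by
  classical
  set recon : ℝ × ({j : Fin m // j ≠ i} → ℝ) → (Fin m → ℝ) :=
    fun p j => if h : j = i then p.1 else p.2 ⟨j, h⟩ with hrecon
  have hreconmeas : Measurable recon := by
    apply measurable_pi_lambda
    intro j
    by_cases h : j = i
    · simp only [hrecon, dif_pos h]
      exact measurable_fst
    · simp only [hrecon, dif_neg h]
      exact (measurable_pi_apply _).comp measurable_snd
  have hF : Measurable (fun p => Ydef α (recon p) i) :=
    (measurable_Ydef α i).comp hreconmeas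
  have hfactor : (fun ω => Ydef α (fun k => G k ω) i)
      = (fun p => Ydef α (recon p) i) ∘
        (fun ω => (|G i ω|, fun j : {j : Fin m // j ≠ i} => G j.1 ω)) := by
    funext ω
    simp only [Function.comp_apply]
    rw [← Ydef_upd α (fun k => G k ω) i]
    congr 1
    funext j
    by_cases h : j = i
    · subst h
      simp only [hrecon, dif_pos]
      rw [Function.update_self]
    · simp only [hrecon, dif_neg h]
      rw [Function.update_of_ne h]
  rw [hfactor]
  have hmeas : Measurable[sigmaG G i] ((fun p => Ydef α (recon p) i) ∘
      (fun ω => (|G i ω|, fun j : {j : Fin m // j ≠ i} => G j.1 ω))) := by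
    intro s hs
    exact ⟨_, hF hs, rfl⟩
  exact hmeas.stronglyMeasurable

lemma sigmaG_le (G : Fin m → Ω → ℝ) (hG : ∀ k, Measurable (G k)) (i : Fin m) :
    sigmaG G i ≤ ‹MeasurableSpace Ω› := by
  have hφ : Measurable (fun ω => (|G i ω|,
      fun j : {j : Fin m // j ≠ i} => G j.1 ω)) :=
    ((hG i).abs.prodMk (measurable_pi_lambda _ (fun j => hG j.1)))
  rintro s ⟨t, ht, rfl⟩
  exact hφ ht

lemma integral_add3 {P : Measure Ω} {f g h : Ω → ℝ}
    (hf : Integrable f P) (hg : Integrable g P) (hh : Integrable h P) :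
    ∫ ω, (f ω + g ω + h ω) ∂P
      = (∫ ω, f ω ∂P) + (∫ ω, g ω ∂P) + ∫ ω, h ω ∂P := by
  have e1 : ∫ ω, ((f ω + g ω) + h ω) ∂P
      = (∫ ω, (f ω + g ω) ∂P) + ∫ ω, h ω ∂P := integral_add (hf.add hg) hh
  rw [e1, integral_add hf hg]

lemma integral_add3' {P : Measure Ω} {f g h : Ω → ℝ}
    (hf : Integrable f P) (hg : Integrable g P) (hh : Integrable h P) :
    (∫ ω, f ω ∂P) + (∫ ω, g ω ∂P) = ∫ ω, (f ω + g ω) ∂P :=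
  (integral_add hf hg).symm

lemma integrable_bdd {P : Measure Ω} [IsFiniteMeasure P]
    {f : Ω → ℝ} (hf : Measurable f) (C : ℝ) (h : ∀ ω, |f ω| ≤ C) : Integrable f P :=
  (integrable_const C).mono' hf.aestronglyMeasurable
    (Filter.Eventually.of_forall (fun ω => by simpa [Real.norm_eq_abs] using h ω))

lemma ite_abs_le_one {c : Prop} [Decidable c] : |if c then (1:ℝ) else 0| ≤ 1 := by
  split_ifs <;> norm_num

/-- The key conditional-expectation step. -/
lemma key_le (P : Measure Ω) [IsProbabilityMeasure P]
    (α : ℝ) (G : Fin m → Ω → ℝ) (hGmeas : ∀ k, Measurable (G k))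
    (KL : Fin m → Ω → ℝ) (hKLmeas : ∀ k, Measurable (KL k))
    (i : Fin m) (ε : ℝ)
    (hc : ∀ᵐ ω ∂P,
        (P[(fun ω' => if 0 < G i ω' ∧ KL i ω' ≤ ε then (1 : ℝ) else 0) | sigmaG G i]) ω
          ≤ Real.exp ε *
            (P[(fun ω' => if G i ω' < 0 then (1 : ℝ) else 0) | sigmaG G i]) ω) :
    ∫ ω, Ydef α (fun k => G k ω) i * (if 0 < G i ω ∧ KL i ω ≤ ε then (1:ℝ) else 0) ∂P
      ≤ Real.exp ε *
        ∫ ω, Ydef α (fun k => G k ω) i * (if G i ω < 0 then (1:ℝ) else 0) ∂P := by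
  have hle : sigmaG G i ≤ ‹MeasurableSpace Ω› := sigmaG_le G hGmeas i
  haveI : IsFiniteMeasure (P.trim hle) := isFiniteMeasure_trim hle
  set Y : Ω → ℝ := fun ω => Ydef α (fun k => G k ω) i with hYd
  set f : Ω → ℝ := fun ω => if 0 < G i ω ∧ KL i ω ≤ ε then (1:ℝ) else 0 with hfd
  set g : Ω → ℝ := fun ω => if G i ω < 0 then (1:ℝ) else 0 with hgd
  have hYsm : StronglyMeasurable[sigmaG G i] Y := stronglyMeasurable_Ydef α G i
  have hYmeas : Measurable Y :=
    (measurable_Ydef α i).comp (measurable_pi_lambda _ hGmeas)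
  have hY0 : ∀ ω, 0 ≤ Y ω := fun ω => Ydef_nonneg _ _ _
  have hY1 : ∀ ω, |Y ω| ≤ 1 := fun ω => by
    rw [abs_of_nonneg (hY0 ω)]
    exact Ydef_le_one _ _ _
  have hfmeas : Measurable f := by
    apply Measurable.ite _ measurable_const measurable_const
    have : {ω | 0 < G i ω ∧ KL i ω ≤ ε}
        = {ω | 0 < G i ω} ∩ {ω | KL i ω ≤ ε} := rfl
    rw [this]
    exact (measurableSet_lt measurable_const (hGmeas i)).inter
      (measurableSet_le (hKLmeas i) measurable_const)
  have hgmeas : Measurable g := by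
    apply Measurable.ite _ measurable_const measurable_const
    exact measurableSet_lt (hGmeas i) measurable_const
  have hfint : Integrable f P := integrable_bdd hfmeas 1 (fun ω => ite_abs_le_one)
  have hgint : Integrable g P := integrable_bdd hgmeas 1 (fun ω => ite_abs_le_one)
  have hYfint : Integrable (Y * f) P := by
    apply integrable_bdd (hYmeas.mul hfmeas) 1
    intro ω
    rw [Pi.mul_apply, abs_mul]
    calc |Y ω| * |f ω| ≤ 1 * 1 :=
      mul_le_mul (hY1 ω) ite_abs_le_one (abs_nonneg _) zero_le_one
    _ = 1 := mul_one 1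
  have hYgint : Integrable (Y * g) P := by
    apply integrable_bdd (hYmeas.mul hgmeas) 1
    intro ω
    rw [Pi.mul_apply, abs_mul]
    calc |Y ω| * |g ω| ≤ 1 * 1 :=
      mul_le_mul (hY1 ω) ite_abs_le_one (abs_nonneg _) zero_le_one
    _ = 1 := mul_one 1
  have hmul_f := condExp_mul_of_stronglyMeasurable_left hYsm hYfint hfint
  have hmul_g := condExp_mul_of_stronglyMeasurable_left hYsm hYgint hgint
  have hintY_cf : Integrable (fun ω => Y ω * (P[f|sigmaG G i]) ω) P := by
    apply Integrable.bdd_mul integrable_condExp hYmeas.aestronglyMeasurable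
    refine Filter.Eventually.of_forall (fun ω => (?_ : ‖Y ω‖ ≤ 1))
    rw [Real.norm_eq_abs]
    exact hY1 ω
  have hintY_cg : Integrable (fun ω => Y ω * (Real.exp ε * (P[g|sigmaG G i]) ω)) P := by
    have : (fun ω => Y ω * (Real.exp ε * (P[g|sigmaG G i]) ω))
        = fun ω => (Real.exp ε * Y ω) * (P[g|sigmaG G i]) ω := by
      funext ω; ring
    rw [this]
    apply Integrable.bdd_mul integrable_condExp
      ((measurable_const.mul hYmeas).aestronglyMeasurable)
    refine Filter.Eventually.of_forall (fun ω => (?_ : ‖Real.exp ε * Y ω‖ ≤ Real.exp ε))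
    rw [Real.norm_eq_abs, abs_mul, abs_of_pos (Real.exp_pos ε)]
    calc Real.exp ε * |Y ω| ≤ Real.exp ε * 1 :=
      mul_le_mul_of_nonneg_left (hY1 ω) (Real.exp_pos ε).le
    _ = Real.exp ε := mul_one _
  calc ∫ ω, Y ω * f ω ∂P = ∫ ω, (P[Y * f|sigmaG G i]) ω ∂P :=
        (integral_condExp hle).symm
    _ = ∫ ω, Y ω * (P[f|sigmaG G i]) ω ∂P := by
        apply integral_congr_ae
        filter_upwards [hmul_f] with ω hω
        exact hω
    _ ≤ ∫ ω, Y ω * (Real.exp ε * (P[g|sigmaG G i]) ω) ∂P := by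
        apply integral_mono_ae hintY_cf hintY_cg
        filter_upwards [hc] with ω hω
        exact mul_le_mul_of_nonneg_left hω (hY0 ω)
    _ = Real.exp ε * ∫ ω, Y ω * (P[g|sigmaG G i]) ω ∂P := by
        rw [← integral_const_mul]
        congr 1
        funext ω
        ring
    _ = Real.exp ε * ∫ ω, (P[Y * g|sigmaG G i]) ω ∂P := by
        congr 1
        apply integral_congr_ae
        filter_upwards [hmul_g] with ω hω
        exact hω.symm
    _ = Real.exp ε * ∫ ω, Y ω * g ω ∂P := by
        rw [integral_condExp hle]
        rfl

end Prob

end FDR3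

/-- **FDR bound under approximate pairwise exchangeability (Theorem 3, part (b)).**
Under the conditional-expectation hypothesis of Theorem 3(a), the e-BH procedure at
level `α` applied to the mirror e-values has
`FDR ≤ inf_{ε ≥ 0} α·[e^ε + Σ_{i∈H₀} ℙ(K̂L i > ε)]`. -/
theorem fdr_bound_approximate_exchangeability
    {Ω : Type*} [MeasurableSpace Ω] (P : Measure Ω) [IsProbabilityMeasure P]
    (m : ℕ) (hm : 1 ≤ m) (H0 : Finset (Fin m)) (α : ℝ) (hα : α ∈ Set.Ioo (0 : ℝ) 1)
    (G : Fin m → Ω → ℝ) (hGmeas : ∀ i, Measurable (G i))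
    (KL : Fin m → Ω → ℝ) (hKLmeas : ∀ i, Measurable (KL i))
    (hcond : ∀ i ∈ H0, ∀ ε : ℝ, 0 ≤ ε →
      ∀ᵐ ω ∂P,
        (P[(fun ω' => if 0 < G i ω' ∧ KL i ω' ≤ ε then (1 : ℝ) else 0) | sigmaG G i]) ω
          ≤ Real.exp ε *
            (P[(fun ω' => if G i ω' < 0 then (1 : ℝ) else 0) | sigmaG G i]) ω) :
    (∫ ω, (((ebh α fun i => mirrorEValue α (fun k => G k ω) i) ∩ H0).card : ℝ) /
        max (((ebh α fun i => mirrorEValue α (fun k => G k ω) i).card : ℝ)) 1 ∂P)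
      ≤ ⨅ ε : {ε : ℝ // 0 ≤ ε},
          α * (Real.exp ε.1 + ∑ i ∈ H0, (P {ω | ε.1 < KL i ω}).toReal) := by
  classical
  apply le_ciInf
  rintro ⟨ε, hε⟩
  dsimp only
  have hexp1 : (1:ℝ) ≤ Real.exp ε := Real.one_le_exp hε
  set Y : Fin m → Ω → ℝ := fun i ω => FDR3.Ydef α (fun k => G k ω) i with hY
  set F : Fin m → Ω → ℝ := fun i ω => if 0 < G i ω ∧ KL i ω ≤ ε then (1:ℝ) else 0 with hF
  set Z : Fin m → Ω → ℝ := fun i ω => if G i ω = 0 then (1:ℝ) else 0 with hZ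
  set Gg : Fin m → Ω → ℝ := fun i ω => if G i ω < 0 then (1:ℝ) else 0 with hGg
  set Hh : Fin m → Ω → ℝ := fun i ω => if ε < KL i ω then (1:ℝ) else 0 with hHh
  have hGv : Measurable (fun ω => (fun k => G k ω)) := measurable_pi_lambda _ hGmeas
  have hYmeas : ∀ i, Measurable (Y i) := fun i => (FDR3.measurable_Ydef α i).comp hGv
  have hY0 : ∀ i ω, 0 ≤ Y i ω := fun i ω => FDR3.Ydef_nonneg _ _ _
  have hY1 : ∀ i ω, Y i ω ≤ 1 := fun i ω => FDR3.Ydef_le_one _ _ _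
  have hFmeas : ∀ i, Measurable (F i) := by
    intro i
    apply Measurable.ite _ measurable_const measurable_const
    have : {ω | 0 < G i ω ∧ KL i ω ≤ ε}
        = {ω | 0 < G i ω} ∩ {ω | KL i ω ≤ ε} := rfl
    rw [this]
    exact (measurableSet_lt measurable_const (hGmeas i)).inter
      (measurableSet_le (hKLmeas i) measurable_const)
  have hZmeas : ∀ i, Measurable (Z i) := by
    intro i
    apply Measurable.ite _ measurable_const measurable_const
    exact measurableSet_eq_fun (hGmeas i) measurable_const
  have hGgmeas : ∀ i, Measurable (Gg i) := by
    intro i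
    apply Measurable.ite _ measurable_const measurable_const
    exact measurableSet_lt (hGmeas i) measurable_const
  have hHmeas : ∀ i, Measurable (Hh i) := by
    intro i
    apply Measurable.ite _ measurable_const measurable_const
    exact measurableSet_lt measurable_const (hKLmeas i)
  -- integrability of all products
  have hprod_int : ∀ (W : Fin m → Ω → ℝ), (∀ i, Measurable (W i)) →
      (∀ i ω, |W i ω| ≤ 1) → ∀ i, Integrable (fun ω => Y i ω * W i ω) P := by
    intro W hWm hWb i
    apply FDR3.integrable_bdd ((hYmeas i).mul (hWm i)) 1
    intro ω
    rw [Pi.mul_apply, abs_mul]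
    calc |Y i ω| * |W i ω| ≤ 1 * 1 := by
          apply mul_le_mul _ (hWb i ω) (abs_nonneg _) zero_le_one
          rw [abs_of_nonneg (hY0 i ω)]
          exact hY1 i ω
      _ = 1 := mul_one 1
  have hYF_int : ∀ i, Integrable (fun ω => Y i ω * F i ω) P :=
    hprod_int F hFmeas (fun i ω => FDR3.ite_abs_le_one)
  have hYZ_int : ∀ i, Integrable (fun ω => Y i ω * Z i ω) P :=
    hprod_int Z hZmeas (fun i ω => FDR3.ite_abs_le_one)
  have hYG_int : ∀ i, Integrable (fun ω => Y i ω * Gg i ω) P :=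
    hprod_int Gg hGgmeas (fun i ω => FDR3.ite_abs_le_one)
  have hH_int : ∀ i, Integrable (Hh i) P :=
    fun i => FDR3.integrable_bdd (hHmeas i) 1 (fun ω => FDR3.ite_abs_le_one)
  -- the bound function
  set B : Ω → ℝ := fun ω =>
    α * ∑ i ∈ H0, (Y i ω * F i ω + Y i ω * Z i ω + Hh i ω) with hB
  have hsummand_int : ∀ i ∈ H0,
      Integrable (fun ω => Y i ω * F i ω + Y i ω * Z i ω + Hh i ω) P :=
    fun i _ => ((hYF_int i).add (hYZ_int i)).add (hH_int i)
  have hBint : Integrable B P := by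
    apply Integrable.const_mul
    exact integrable_finset_sum H0 hsummand_int
  -- pointwise bound
  have hpt : ∀ ω,
      (((ebh α fun i => mirrorEValue α (fun k => G k ω) i) ∩ H0).card : ℝ) /
        max (((ebh α fun i => mirrorEValue α (fun k => G k ω) i).card : ℝ)) 1 ≤ B ω := by
    intro ω
    refine le_trans (FDR3.fdp_le hm hα (fun k => G k ω) H0) ?_
    apply mul_le_mul_of_nonneg_left _ hα.1.le
    apply Finset.sum_le_sum
    intro i _
    exact FDR3.summand_le α (fun k => G k ω) i (KL i ω) ε
  have h1 : (∫ ω, (((ebh α fun i => mirrorEValue α (fun k => G k ω) i) ∩ H0).card : ℝ) /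
        max (((ebh α fun i => mirrorEValue α (fun k => G k ω) i).card : ℝ)) 1 ∂P)
      ≤ ∫ ω, B ω ∂P := by
    apply integral_mono_of_nonneg _ hBint (Filter.Eventually.of_forall hpt)
    apply Filter.Eventually.of_forall
    intro ω
    apply div_nonneg (Nat.cast_nonneg _)
    exact le_trans zero_le_one (le_max_right _ 1)
  refine le_trans h1 ?_
  -- compute ∫ B
  have hBeq : ∫ ω, B ω ∂P
      = α * ∑ i ∈ H0, ((∫ ω, Y i ω * F i ω ∂P) + (∫ ω, Y i ω * Z i ω ∂P)
          + ∫ ω, Hh i ω ∂P) := by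
    rw [hB, integral_const_mul]
    congr 1
    rw [integral_finset_sum H0 hsummand_int]
    apply Finset.sum_congr rfl
    intro i hi
    exact FDR3.integral_add3 (hYF_int i) (hYZ_int i) (hH_int i)
  rw [hBeq]
  apply mul_le_mul_of_nonneg_left _ hα.1.le
  -- per-i facts
  have hkey : ∀ i ∈ H0, (∫ ω, Y i ω * F i ω ∂P)
      ≤ Real.exp ε * ∫ ω, Y i ω * Gg i ω ∂P := by
    intro i hi
    exact FDR3.key_le P α G hGmeas KL hKLmeas i ε (hcond i hi ε hε)
  have hHval : ∀ i, (∫ ω, Hh i ω ∂P) = (P {ω | ε < KL i ω}).toReal := by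
    intro i
    have hind : Hh i = Set.indicator {ω | ε < KL i ω} (fun _ => (1:ℝ)) := by
      funext ω
      rw [Set.indicator_apply]
      simp only [Set.mem_setOf_eq]
      by_cases h : ε < KL i ω <;> simp [hHh, h]
    rw [hind, integral_indicator_const (1:ℝ)
      (measurableSet_lt measurable_const (hKLmeas i)), smul_eq_mul, mul_one]
    rfl
  have hbc_nonneg : ∀ i, (0:ℝ) ≤ ∫ ω, Y i ω * Gg i ω ∂P := by
    intro i
    apply integral_nonneg
    intro ω
    apply mul_nonneg (hY0 i ω)
    show (0:ℝ) ≤ if G i ω < 0 then 1 else 0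
    split_ifs <;> norm_num
  have hc_nonneg : ∀ i, (0:ℝ) ≤ ∫ ω, Y i ω * Z i ω ∂P := by
    intro i
    apply integral_nonneg
    intro ω
    apply mul_nonneg (hY0 i ω)
    show (0:ℝ) ≤ if G i ω = 0 then 1 else 0
    split_ifs <;> norm_num
  -- the budget: Σ (∫YG + ∫YZ) ≤ 1
  have hbudget : ∑ i ∈ H0, ((∫ ω, Y i ω * Gg i ω ∂P) + ∫ ω, Y i ω * Z i ω ∂P) ≤ 1 := by
    have hstep1 : ∀ i ∈ H0, (∫ ω, Y i ω * Gg i ω ∂P) + (∫ ω, Y i ω * Z i ω ∂P)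
        = ∫ ω, Y i ω * (Gg i ω + Z i ω) ∂P := by
      intro i _
      have e : ∫ ω, (Y i ω * Gg i ω + Y i ω * Z i ω) ∂P
          = (∫ ω, Y i ω * Gg i ω ∂P) + ∫ ω, Y i ω * Z i ω ∂P :=
        integral_add (hYG_int i) (hYZ_int i)
      rw [← e]
      apply integral_congr_ae
      apply Filter.Eventually.of_forall
      intro ω
      ring
    rw [Finset.sum_congr rfl hstep1]
    have hsum_int : Integrable (fun ω => ∑ i ∈ H0, Y i ω * (Gg i ω + Z i ω)) P := by
      apply integrable_finset_sum
      intro i _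
      have : (fun ω => Y i ω * (Gg i ω + Z i ω))
          = fun ω => Y i ω * Gg i ω + Y i ω * Z i ω := by
        funext ω; ring
      rw [this]
      exact (hYG_int i).add (hYZ_int i)
    rw [← integral_finset_sum H0 (fun i _ => by
      have : (fun ω => Y i ω * (Gg i ω + Z i ω))
          = fun ω => Y i ω * Gg i ω + Y i ω * Z i ω := by
        funext ω; ring
      rw [this]
      exact (hYG_int i).add (hYZ_int i))]
    have hle1 : ∀ ω, ∑ i ∈ H0, Y i ω * (Gg i ω + Z i ω) ≤ 1 := by
      intro ω
      have hkey1 := FDR3.sum_Y_le_one α (fun k => G k ω) H0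
      refine le_trans (le_of_eq ?_) hkey1
      apply Finset.sum_congr rfl
      intro i _
      congr 1
      exact FDR3.ite_add_ite_nonpos (G i ω)
    calc (∫ ω, ∑ i ∈ H0, Y i ω * (Gg i ω + Z i ω) ∂P) ≤ ∫ _ω, (1:ℝ) ∂P := by
          apply integral_mono hsum_int (integrable_const 1)
          exact hle1
      _ = 1 := by simp
  -- put everything together
  calc ∑ i ∈ H0, ((∫ ω, Y i ω * F i ω ∂P) + (∫ ω, Y i ω * Z i ω ∂P) + ∫ ω, Hh i ω ∂P)
      ≤ ∑ i ∈ H0, (Real.exp ε * ((∫ ω, Y i ω * Gg i ω ∂P) + ∫ ω, Y i ω * Z i ω ∂P)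
          + (P {ω | ε < KL i ω}).toReal) := by
        apply Finset.sum_le_sum
        intro i hi
        rw [hHval i]
        have h1 := hkey i hi
        have h2 := hc_nonneg i
        have h3 := hbc_nonneg i
        nlinarith [hexp1]
    _ = Real.exp ε * (∑ i ∈ H0, ((∫ ω, Y i ω * Gg i ω ∂P) + ∫ ω, Y i ω * Z i ω ∂P))
          + ∑ i ∈ H0, (P {ω | ε < KL i ω}).toReal := by
        rw [Finset.sum_add_distrib, Finset.mul_sum]
    _ ≤ Real.exp ε * 1 + ∑ i ∈ H0, (P {ω | ε < KL i ω}).toReal := by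
        have := mul_le_mul_of_nonneg_left hbudget (Real.exp_pos ε).le
        linarith
    _ = Real.exp ε + ∑ i ∈ H0, (P {ω | ε < KL i ω}).toReal := by rw [mul_one]
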